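/- If (S, T⁺, T⁻) is an abstract spectrum, then both topological spaces (S, T⁺) and (S, T⁻) are compact T₀-spaces. -/

import Mathlib

/-- `B` is a base for the topology `t`: every element of `B` is open and every
open set is a union of elements of `B`. -/
def IsBaseFor {S : Type*} (t : TopologicalSpace S) (B : Set (Set S)) : Prop :=
  (∀ V ∈ B, t.IsOpen V) ∧ ∀ U : Set S, t.IsOpen U → ∀ x ∈ U, ∃ V ∈ B, x ∈ V ∧ V ⊆ U

/-- The family `L⁺ = {U ∈ T⁺ : S∖U ∈ T⁻}` (for `specL tp tm`); `specL tm tp` is `L⁻`. -/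
def specL {S : Type*} (tp tm : TopologicalSpace S) : Set (Set S) :=
  {U | tp.IsOpen U ∧ tm.IsOpen Uᶜ}

/-- `(S, T⁺, T⁻)` is an abstract spectrum. -/
structure IsAbstractSpectrum {S : Type*} (tp tm : TopologicalSpace S) : Prop where
  nonempty : Nonempty S
  base_plus : IsBaseFor tp (specL tp tm)
  base_minus : IsBaseFor tm (specL tm tp)
  compact_of_plus_closed : ∀ F : Set S, @IsClosed S tp F → @IsCompact S tm F
  compact_of_minus_closed : ∀ F : Set S, @IsClosed S tm F → @IsCompact S tp F
  t0 : @T0Space S tp ∨ @T0Space S tm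

/-- Points agreeing on a base are inseparable. -/
lemma insep_of_base {S : Type*} (t : TopologicalSpace S) (B : Set (Set S))
    (hB : IsBaseFor t B) (x y : S) (hxy : ∀ V ∈ B, (x ∈ V ↔ y ∈ V)) :
    @Inseparable S t x y := by
  letI := t
  rw [inseparable_iff_forall_isOpen]
  intro s hs
  constructor
  · intro hx
    obtain ⟨V, hVB, hxV, hVs⟩ := hB.2 s hs x hx
    exact hVs ((hxy V hVB).1 hxV)
  · intro hy
    obtain ⟨V, hVB, hyV, hVs⟩ := hB.2 s hs y hy
    exact hVs ((hxy V hVB).2 hyV)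

/-- Inseparability in `tp` implies inseparability in `tm` for an abstract spectrum. -/
lemma insep_trans {S : Type*} (tp tm : TopologicalSpace S)
    (hbm : IsBaseFor tm (specL tm tp)) (x y : S)
    (hxy : @Inseparable S tp x y) : @Inseparable S tm x y := by
  apply insep_of_base tm _ hbm
  intro V hV
  have hVc : tp.IsOpen Vᶜ := hV.2
  have := (@inseparable_iff_forall_isOpen S tp x y).1 hxy Vᶜ hVc
  simp only [Set.mem_compl_iff] at this
  tauto

theorem stmt0 {S : Type*} (tp tm : TopologicalSpace S)
    (h : IsAbstractSpectrum tp tm) :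
    @CompactSpace S tp ∧ @T0Space S tp ∧ @CompactSpace S tm ∧ @T0Space S tm := by
  have hsymm : ∀ x y : S, @Inseparable S tp x y ↔ @Inseparable S tm x y := by
    intro x y
    constructor
    · exact insep_trans tp tm h.base_minus x y
    · exact insep_trans tm tp h.base_plus x y
  have ht0 : @T0Space S tp ∧ @T0Space S tm := by
    rcases h.t0 with ht | ht
    · refine ⟨ht, ?_⟩
      rw [@t0Space_iff_inseparable S tm]
      intro x y hxy
      exact (@t0Space_iff_inseparable S tp).1 ht x y ((hsymm x y).2 hxy)
    · refine ⟨?_, ht⟩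
      rw [@t0Space_iff_inseparable S tp]
      intro x y hxy
      exact (@t0Space_iff_inseparable S tm).1 ht x y ((hsymm x y).1 hxy)
  exact ⟨@CompactSpace.mk S tp (h.compact_of_minus_closed Set.univ (@isClosed_univ S tm)), ht0.1,
    @CompactSpace.mk S tm (h.compact_of_plus_closed Set.univ (@isClosed_univ S tp)), ht0.2⟩
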